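/- arXiv:2604.24390 — 2 statements merged into one kernel-verified Lean document; each statement's English description precedes it below -/
import Mathlib

section
/- Let T > 0, α ∈ (0, 1/2), C > 0, ε ∈ (0, 1/α − 2) and γ ∈ (0, 1/(2+ε) − α]. Define the fractional kernel K(s,t) := C·(t−s)^{−α} for 0 ≤ s < t ≤ T. Then there exists a constant L > 0 such that for all 0 ≤ t ≤ t' ≤ T one has ∫_0^t |K(s,t') − K(s,t)|^{2+ε} ds + ∫_t^{t'} |K(s,t')|^{2+ε} ds ≤ L·(t'−t)^{γ(2+ε)}. -/
open MeasureTheory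

lemma aux_sub_rpow {a b p : ℝ} (hb : 0 ≤ b) (hba : b ≤ a) (hp : 1 ≤ p) :
    (a - b) ^ p ≤ a ^ p - b ^ p := by
  have hab : 0 ≤ a - b := sub_nonneg.2 hba
  have h := NNReal.add_rpow_le_rpow_add ((a - b).toNNReal) (b.toNNReal) hp
  have h2 : (a - b) ^ p + b ^ p ≤ a ^ p := by
    have h' := NNReal.coe_le_coe.2 h
    push_cast [NNReal.coe_rpow] at h'
    rwa [Real.coe_toNNReal _ hab, Real.coe_toNNReal _ hb, sub_add_cancel] at h'
  linarith

/-- The fractional kernel `K(s,t) = C (t-s)^(-α)` satisfies the kernel regularity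
condition with parameters `γ ∈ (0, 1/(2+ε) - α]` and `ε ∈ (0, 1/α - 2)`. -/
theorem fractional_kernel_regularity
    (T : ℝ) (hT : 0 < T) (C α ε γ : ℝ)
    (hα : α ∈ Set.Ioo (0 : ℝ) (1 / 2)) (hC : 0 < C)
    (hε : ε ∈ Set.Ioo (0 : ℝ) (1 / α - 2))
    (hγ : γ ∈ Set.Ioc (0 : ℝ) (1 / (2 + ε) - α)) :
    ∃ L > 0, ∀ t t' : ℝ, 0 ≤ t → t ≤ t' → t' ≤ T →
      (∫ s in (0 : ℝ)..t, |C * (t' - s) ^ (-α) - C * (t - s) ^ (-α)| ^ (2 + ε)) +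
        (∫ s in t..t', |C * (t' - s) ^ (-α)| ^ (2 + ε))
      ≤ L * (t' - t) ^ (γ * (2 + ε)) := by
  obtain ⟨hα0, hα2⟩ := hα
  obtain ⟨hε0, hε1⟩ := hε
  obtain ⟨hγ0, hγ1⟩ := hγ
  set p : ℝ := 2 + ε with hpdef
  have hp0 : (0:ℝ) < p := by simp only [hpdef]; linarith
  have hp1 : (1:ℝ) ≤ p := by simp only [hpdef]; linarith
  have hαp : α * p < 1 := by
    have h1 : p < 1 / α := by simp only [hpdef]; linarith
    have := mul_lt_mul_of_pos_left h1 hα0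
    rwa [mul_one_div_cancel hα0.ne'] at this
  set β : ℝ := 1 - α * p with hβdef
  have hβ : 0 < β := by simp only [hβdef]; linarith
  have hγp : γ * p ≤ β := by
    have h1 : (1 / p) * p = 1 := by field_simp
    have h2 := mul_le_mul_of_nonneg_right hγ1 hp0.le
    simp only [hβdef]
    nlinarith
  have hγp0 : 0 < γ * p := mul_pos hγ0 hp0
  have hr : (-1 : ℝ) < -(α * p) := by linarith [mul_pos hα0 hp0]
  have hCp : 0 < C ^ p := Real.rpow_pos_of_pos hC p
  refine ⟨2 * C ^ p * T ^ (β - γ * p) / β, by positivity, ?_⟩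
  intro t t' ht htt' ht'T
  rcases eq_or_lt_of_le htt' with h | h
  · subst h
    simp [Real.zero_rpow hp0.ne', Real.zero_rpow hγp0.ne']
  · have hδ : 0 < t' - t := sub_pos.2 h
    have hδT : t' - t ≤ T := by linarith
    -- integrability
    have hint : ∀ c a b : ℝ, IntervalIntegrable (fun s => (c - s) ^ (-(α * p)))
        volume (c - a) (c - b) :=
      fun c a b => (intervalIntegral.intervalIntegrable_rpow' hr (a := a) (b := b)).comp_sub_left c
    have h1 : IntervalIntegrable (fun s => (t - s) ^ (-(α * p))) volume 0 t := by
      simpa using hint t t 0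
    have h2 : IntervalIntegrable (fun s => (t' - s) ^ (-(α * p))) volume 0 t := by
      simpa using hint t' t' (t' - t)
    -- value of the basic integral
    have hval : ∀ a b c : ℝ, (∫ s in a..b, (c - s) ^ (-(α * p)))
        = ((c - a) ^ β - (c - b) ^ β) / β := by
      intro a b c
      rw [intervalIntegral.integral_comp_sub_left (fun u => u ^ (-(α * p))) c,
        integral_rpow (Or.inl hr)]
      have hβ' : -(α * p) + 1 = β := by simp only [hβdef]; ring
      rw [hβ']
    -- pointwise key inequality on [0, t)
    have key : ∀ s : ℝ, s < t →
        |C * (t' - s) ^ (-α) - C * (t - s) ^ (-α)| ^ p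
          ≤ C ^ p * ((t - s) ^ (-(α * p)) - (t' - s) ^ (-(α * p))) := by
      intro s hs
      have hts : 0 < t - s := sub_pos.2 hs
      have ht's : 0 < t' - s := by linarith
      set a : ℝ := (t - s) ^ (-α) with ha
      set b : ℝ := (t' - s) ^ (-α) with hb
      have hba : b ≤ a :=
        Real.rpow_le_rpow_of_nonpos hts (by linarith) (neg_nonpos.2 hα0.le)
      have hb0 : 0 ≤ b := Real.rpow_nonneg ht's.le _
      have habs : |C * b - C * a| = C * (a - b) := by
        rw [abs_sub_comm, abs_of_nonneg (by nlinarith), mul_sub]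
      have hap : a ^ p = (t - s) ^ (-(α * p)) := by
        rw [ha, ← Real.rpow_mul hts.le]; congr 1; ring
      have hbp : b ^ p = (t' - s) ^ (-(α * p)) := by
        rw [hb, ← Real.rpow_mul ht's.le]; congr 1; ring
      calc |C * b - C * a| ^ p = (C * (a - b)) ^ p := by rw [habs]
        _ = C ^ p * (a - b) ^ p := Real.mul_rpow hC.le (sub_nonneg.2 hba)
        _ ≤ C ^ p * (a ^ p - b ^ p) :=
            mul_le_mul_of_nonneg_left (aux_sub_rpow hb0 hba hp1) hCp.le
        _ = C ^ p * ((t - s) ^ (-(α * p)) - (t' - s) ^ (-(α * p))) := by rw [hap, hbp]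
    -- a.e. s ≠ t
    have hne : ∀ᵐ s : ℝ, s ≠ t := by
      rw [ae_iff]
      simpa using measure_singleton (μ := (volume : Measure ℝ)) t
    set f : ℝ → ℝ := fun s => |C * (t' - s) ^ (-α) - C * (t - s) ^ (-α)| ^ p with hf
    set g : ℝ → ℝ := fun s => C ^ p * ((t - s) ^ (-(α * p)) - (t' - s) ^ (-(α * p))) with hg
    have hg_int : IntervalIntegrable g volume 0 t := (h1.sub h2).const_mul _
    have hf_meas : AEStronglyMeasurable f (volume.restrict (Set.uIoc (0:ℝ) t)) := by
      apply Measurable.aestronglyMeasurable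
      fun_prop
    have hf_int : IntervalIntegrable f volume 0 t := by
      refine (h1.const_mul (C ^ p)).mono_fun hf_meas ?_
      filter_upwards [ae_restrict_of_ae hne, ae_restrict_mem measurableSet_uIoc]
        with s hs1 hs2
      rw [Set.uIoc_of_le ht] at hs2
      have hst : s < t := lt_of_le_of_ne hs2.2 hs1
      have hkey := key s hst
      have hnn : (0:ℝ) ≤ (t' - s) ^ (-(α * p)) := Real.rpow_nonneg (by linarith [hs2.1]) _
      have hts0 : (0:ℝ) ≤ t - s := by linarith
      simp only [Real.norm_eq_abs, hf]
      rw [abs_of_nonneg (Real.rpow_nonneg (abs_nonneg _) _),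
        abs_of_nonneg (mul_nonneg hCp.le (Real.rpow_nonneg hts0 _))]
      nlinarith
    have hI1 : (∫ s in (0:ℝ)..t, f s) ≤ ∫ s in (0:ℝ)..t, g s := by
      refine intervalIntegral.integral_mono_ae_restrict ht hf_int hg_int ?_
      filter_upwards [ae_restrict_of_ae hne, ae_restrict_mem measurableSet_Icc]
        with s hs1 hs2
      exact key s (lt_of_le_of_ne hs2.2 hs1)
    have hgval : (∫ s in (0:ℝ)..t, g s)
        = C ^ p * ((t ^ β - (t - t) ^ β) / β - (t' ^ β - (t' - t) ^ β) / β) := by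
      rw [hg, intervalIntegral.integral_const_mul, intervalIntegral.integral_sub h1 h2,
        hval 0 t t, hval 0 t t']
      norm_num
    have hI1' : (∫ s in (0:ℝ)..t, f s) ≤ C ^ p * ((t' - t) ^ β / β) := by
      refine hI1.trans ?_
      rw [hgval, sub_self, Real.zero_rpow hβ.ne', sub_zero]
      have htβ : t ^ β ≤ t' ^ β := Real.rpow_le_rpow ht htt' hβ.le
      have hnum : t ^ β / β - (t' ^ β - (t' - t) ^ β) / β ≤ (t' - t) ^ β / β := by
        rw [div_sub_div_same, div_le_div_iff_of_pos_right hβ]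
        linarith
      exact mul_le_mul_of_nonneg_left hnum hCp.le
    -- second integral
    have hI2 : (∫ s in t..t', |C * (t' - s) ^ (-α)| ^ p)
        = C ^ p * ((t' - t) ^ β / β) := by
      have hcongr : ∀ s ∈ Set.uIcc t t',
          |C * (t' - s) ^ (-α)| ^ p = C ^ p * (t' - s) ^ (-(α * p)) := by
        intro s hs
        rw [Set.uIcc_of_le htt'] at hs
        have h0 : 0 ≤ t' - s := by linarith [hs.2]
        rw [abs_of_nonneg (by positivity), Real.mul_rpow hC.le (Real.rpow_nonneg h0 _),
          ← Real.rpow_mul h0]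
        congr 2
        ring
      rw [intervalIntegral.integral_congr hcongr, intervalIntegral.integral_const_mul,
        hval t t' t', sub_self, Real.zero_rpow hβ.ne', sub_zero]
    -- combine
    have hδβ : (t' - t) ^ β ≤ T ^ (β - γ * p) * (t' - t) ^ (γ * p) := by
      have hsplit : (t' - t) ^ β = (t' - t) ^ (β - γ * p) * (t' - t) ^ (γ * p) := by
        rw [← Real.rpow_add hδ]; congr 1; ring
      rw [hsplit]
      exact mul_le_mul_of_nonneg_right
        (Real.rpow_le_rpow hδ.le hδT (by linarith)) (Real.rpow_nonneg hδ.le _)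
    rw [hI2]
    have hboundδ : 0 ≤ (t' - t) ^ (γ * p) := Real.rpow_nonneg hδ.le _
    have hTnn : 0 ≤ T ^ (β - γ * p) := Real.rpow_nonneg hT.le _
    calc (∫ s in (0:ℝ)..t, f s) + C ^ p * ((t' - t) ^ β / β)
        ≤ C ^ p * ((t' - t) ^ β / β) + C ^ p * ((t' - t) ^ β / β) := by linarith
      _ = 2 * C ^ p * ((t' - t) ^ β) / β := by ring
      _ = 2 * C ^ p / β * ((t' - t) ^ β) := by ring
      _ ≤ 2 * C ^ p / β * (T ^ (β - γ * p) * (t' - t) ^ (γ * p)) :=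
          mul_le_mul_of_nonneg_left hδβ (div_nonneg (by positivity) hβ.le)
      _ = 2 * C ^ p * T ^ (β - γ * p) / β * (t' - t) ^ (γ * p) := by ring
end

section
/- Let T > 0, β > 0, α ∈ (1/2, 1), ε ∈ (0, (2α−1)/(1−α)) and set γ := α − (1+ε)/(2+ε) (note γ > 0). Define the gamma kernel K(s,t) := (1/Γ(α)) · exp(−β(t−s)) · (t−s)^{α−1} for 0 ≤ s < t ≤ T, where Γ is the Gamma function. Then there exists a constant L > 0 such that for all 0 ≤ t ≤ t' ≤ T one has ∫_0^t |K(s,t') − K(s,t)|^{2+ε} ds + ∫_t^{t'} |K(s,t')|^{2+ε} ds ≤ L·(t'−t)^{γ(2+ε)}. -/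
open MeasureTheory intervalIntegral

lemma aux_sub_rpow_s3 {x y p : ℝ} (hy : 0 ≤ y) (hyx : y ≤ x) (hp : 1 ≤ p) :
    (x - y) ^ p ≤ x ^ p - y ^ p := by
  have hx : 0 ≤ x := hy.trans hyx
  have hxy : 0 ≤ x - y := sub_nonneg.2 hyx
  have hp1 : (0:ℝ) ≤ p - 1 := by linarith
  have hpe : 1 + (p - 1) = p := by ring
  have h1 : (x - y) ^ p ≤ (x - y) * x ^ (p - 1) := by
    have e : (x - y) ^ p = (x - y) * (x - y) ^ (p - 1) := by
      rw [← Real.rpow_one_add' hxy (by rw [hpe]; positivity), hpe]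
    rw [e]
    exact mul_le_mul_of_nonneg_left
      (Real.rpow_le_rpow hxy (by linarith) hp1) hxy
  have h2 : y ^ p ≤ y * x ^ (p - 1) := by
    have e : y ^ p = y * y ^ (p - 1) := by
      rw [← Real.rpow_one_add' hy (by rw [hpe]; positivity), hpe]
    rw [e]
    exact mul_le_mul_of_nonneg_left (Real.rpow_le_rpow hy hyx hp1) hy
  have h3 : x ^ p = x * x ^ (p - 1) := by
    rw [← Real.rpow_one_add' hx (by rw [hpe]; positivity), hpe]
  nlinarith [h1, h2, h3]

lemma aux_two_rpow {x y p : ℝ} (hx : 0 ≤ x) (hy : 0 ≤ y) (hp : 0 ≤ p) :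
    (x + y) ^ p ≤ 2 ^ p * (x ^ p + y ^ p) := by
  have hm : x + y ≤ 2 * max x y := by
    rcases le_total x y with h | h
    · rw [max_eq_right h]; linarith
    · rw [max_eq_left h]; linarith
  have hmax : (0:ℝ) ≤ max x y := hx.trans (le_max_left x y)
  calc (x + y) ^ p ≤ (2 * max x y) ^ p :=
        Real.rpow_le_rpow (by positivity) hm hp
    _ = 2 ^ p * (max x y) ^ p := Real.mul_rpow (by norm_num) hmax
    _ ≤ 2 ^ p * (x ^ p + y ^ p) := by
        have h2 : (0:ℝ) ≤ 2 ^ p := Real.rpow_nonneg (by norm_num) p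
        rcases le_total x y with h | h
        · rw [max_eq_right h]
          have := Real.rpow_nonneg hx p
          nlinarith
        · rw [max_eq_left h]
          have := Real.rpow_nonneg hy p
          nlinarith

set_option maxHeartbeats 1000000 in
/-- The gamma kernel `K(s,t) = (1/Γ(α)) * exp (-β (t-s)) * (t-s)^(α-1)` with `β > 0`,
`α ∈ (1/2, 1)`, `ε ∈ (0, (2α-1)/(1-α))` and `γ = α - (1+ε)/(2+ε)` satisfies the kernel
regularity condition. -/
theorem gamma_kernel_regularity
    (T : ℝ) (hT : 0 < T) (β α ε γ : ℝ) (hβ : 0 < β)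
    (hα : α ∈ Set.Ioo (1 / 2 : ℝ) 1)
    (hε : ε ∈ Set.Ioo (0 : ℝ) ((2 * α - 1) / (1 - α)))
    (hγ : γ = α - (1 + ε) / (2 + ε)) :
    ∃ L > 0, ∀ t t' : ℝ, 0 ≤ t → t ≤ t' → t' ≤ T →
      (∫ s in (0 : ℝ)..t,
          |(1 / Real.Gamma α) * Real.exp (-β * (t' - s)) * (t' - s) ^ (α - 1) -
            (1 / Real.Gamma α) * Real.exp (-β * (t - s)) * (t - s) ^ (α - 1)| ^ (2 + ε)) +
        (∫ s in t..t',
          |(1 / Real.Gamma α) * Real.exp (-β * (t' - s)) * (t' - s) ^ (α - 1)| ^ (2 + ε))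
      ≤ L * (t' - t) ^ (γ * (2 + ε)) := by
  obtain ⟨hα1, hα2⟩ := hα
  obtain ⟨hε0, hε2⟩ := hε
  have hp1 : (1:ℝ) ≤ 2 + ε := by linarith
  have hp0 : (0:ℝ) < 2 + ε := by linarith
  have hΓ : 0 < Real.Gamma α := Real.Gamma_pos_of_pos (by linarith)
  obtain ⟨c, hc_def⟩ : ∃ x : ℝ, x = 1 / Real.Gamma α := ⟨_, rfl⟩
  have hc : 0 < c := by rw [hc_def]; positivity
  obtain ⟨r, hr_def⟩ : ∃ x : ℝ, x = (α - 1) * (2 + ε) := ⟨_, rfl⟩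
  have hεα : ε * (1 - α) < 2 * α - 1 := by
    have h1α : (0:ℝ) < 1 - α := by linarith
    rw [lt_div_iff₀ h1α] at hε2
    linarith
  have hr : -1 < r := by rw [hr_def]; nlinarith
  obtain ⟨q, hq_def⟩ : ∃ x : ℝ, x = r + 1 := ⟨_, rfl⟩
  have hq0 : 0 < q := by linarith
  have hr0 : r < 0 := by rw [hr_def]; nlinarith
  have hq1 : q < 1 := by rw [hq_def]; linarith
  have hqγ : γ * (2 + ε) = q := by
    rw [hγ, hq_def, hr_def]; field_simp; ring
  refine ⟨c ^ (2+ε) * (2 ^ (2+ε) * (1 + β ^ (2+ε) * T ^ (2+ε)) + 1) / q, by positivity, ?_⟩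
  intro t t' ht0 htt' ht'T
  rw [hqγ, ← hc_def]
  have hδ0 : 0 ≤ t' - t := by linarith
  have hδT : t' - t ≤ T := by linarith
  have htT : t ≤ T := le_trans htt' ht'T
  -- integrability and value of s ↦ (d - s)^r on any interval
  have hint_rpow : ∀ d a b : ℝ, IntervalIntegrable (fun s => (d - s) ^ r) volume a b := by
    intro d a b
    have h := (intervalIntegrable_rpow' hr (a := d - a) (b := d - b)).comp_sub_left d
    simpa using h
  have hval : ∀ d a b : ℝ, (∫ s in a..b, (d - s) ^ r) = ((d - a) ^ q - (d - b) ^ q) / q := by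
    intro d a b
    rw [integral_comp_sub_left (fun u => u ^ r) d,
      integral_rpow (Or.inl hr), hq_def]
  -- second integral
  have hI2 : (∫ s in t..t',
      |c * Real.exp (-β * (t' - s)) * (t' - s) ^ (α - 1)| ^ (2 + ε))
      ≤ c ^ (2+ε) * (t' - t) ^ q / q := by
    have hgi : IntervalIntegrable (fun s => c ^ (2+ε) * (t' - s) ^ r) volume t t' :=
      (hint_rpow t' t t').const_mul _
    have hgval : (∫ s in t..t', c ^ (2+ε) * (t' - s) ^ r)
        = c ^ (2+ε) * (t' - t) ^ q / q := by
      rw [intervalIntegral.integral_const_mul, hval, sub_self, Real.zero_rpow hq0.ne']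
      ring
    have hptw : ∀ s ∈ Set.Icc t t',
        |c * Real.exp (-β * (t' - s)) * (t' - s) ^ (α - 1)| ^ (2 + ε)
          ≤ c ^ (2+ε) * (t' - s) ^ r := by
      intro s hs
      have hu : 0 ≤ t' - s := by linarith [hs.2]
      have hrp : 0 ≤ (t' - s) ^ (α - 1) := Real.rpow_nonneg hu _
      have habs : |c * Real.exp (-β * (t' - s)) * (t' - s) ^ (α - 1)|
          = c * Real.exp (-β * (t' - s)) * (t' - s) ^ (α - 1) :=
        abs_of_nonneg (by positivity)
      have he : Real.exp (-β * (t' - s)) ≤ 1 :=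
        Real.exp_le_one_iff.mpr (by nlinarith)
      have h2 : c * Real.exp (-β * (t' - s)) * (t' - s) ^ (α - 1)
          ≤ c * (t' - s) ^ (α - 1) := by
        nlinarith [mul_nonneg (mul_nonneg hc.le (sub_nonneg.2 he)) hrp]
      rw [habs]
      calc (c * Real.exp (-β * (t' - s)) * (t' - s) ^ (α - 1)) ^ (2 + ε)
          ≤ (c * (t' - s) ^ (α - 1)) ^ (2 + ε) :=
            Real.rpow_le_rpow (by positivity) h2 (by linarith)
        _ = c ^ (2+ε) * ((t' - s) ^ (α - 1)) ^ (2 + ε) := Real.mul_rpow hc.le hrp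
        _ = c ^ (2+ε) * (t' - s) ^ r := by rw [← Real.rpow_mul hu, ← hr_def]
    by_cases hfi : IntervalIntegrable
        (fun s => |c * Real.exp (-β * (t' - s)) * (t' - s) ^ (α - 1)| ^ (2 + ε)) volume t t'
    · calc (∫ s in t..t', |c * Real.exp (-β * (t' - s)) * (t' - s) ^ (α - 1)| ^ (2 + ε))
          ≤ ∫ s in t..t', c ^ (2+ε) * (t' - s) ^ r :=
            intervalIntegral.integral_mono_on htt' hfi hgi hptw
        _ = c ^ (2+ε) * (t' - t) ^ q / q := hgval
    · rw [intervalIntegral.integral_undef hfi]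
      positivity
  -- first integral
  have hI1 : (∫ s in (0:ℝ)..t,
      |c * Real.exp (-β * (t' - s)) * (t' - s) ^ (α - 1) -
        c * Real.exp (-β * (t - s)) * (t - s) ^ (α - 1)| ^ (2 + ε))
      ≤ c ^ (2+ε) * 2 ^ (2+ε) * (1 + β ^ (2+ε) * T ^ (2+ε)) * (t' - t) ^ q / q := by
    have hint1 : IntervalIntegrable (fun s => (t - s) ^ r - (t' - s) ^ r) volume 0 t :=
      (hint_rpow t 0 t).sub (hint_rpow t' 0 t)
    have hint2 : IntervalIntegrable
        (fun s => β ^ (2+ε) * (t' - t) ^ (2+ε) * (t - s) ^ r) volume 0 t :=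
      (hint_rpow t 0 t).const_mul _
    have hgi : IntervalIntegrable (fun s => c ^ (2+ε) * 2 ^ (2+ε) *
        (((t - s) ^ r - (t' - s) ^ r) + β ^ (2+ε) * (t' - t) ^ (2+ε) * (t - s) ^ r))
        volume 0 t := (hint1.add hint2).const_mul _
    have hA : (∫ s in (0:ℝ)..t, (t - s) ^ r) = t ^ q / q := by
      rw [hval, sub_zero, sub_self, Real.zero_rpow hq0.ne', sub_zero]
    have hB : (∫ s in (0:ℝ)..t, (t' - s) ^ r) = (t' ^ q - (t' - t) ^ q) / q := by
      rw [hval, sub_zero]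
    have hgval : (∫ s in (0:ℝ)..t, c ^ (2+ε) * 2 ^ (2+ε) *
        (((t - s) ^ r - (t' - s) ^ r) + β ^ (2+ε) * (t' - t) ^ (2+ε) * (t - s) ^ r))
        = c ^ (2+ε) * 2 ^ (2+ε) *
          ((t ^ q / q - (t' ^ q - (t' - t) ^ q) / q) +
            β ^ (2+ε) * (t' - t) ^ (2+ε) * (t ^ q / q)) := by
      rw [intervalIntegral.integral_const_mul, intervalIntegral.integral_add hint1 hint2,
        intervalIntegral.integral_sub (hint_rpow t 0 t) (hint_rpow t' 0 t),
        intervalIntegral.integral_const_mul, hA, hB]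
    have hbound : c ^ (2+ε) * 2 ^ (2+ε) *
        ((t ^ q / q - (t' ^ q - (t' - t) ^ q) / q) +
          β ^ (2+ε) * (t' - t) ^ (2+ε) * (t ^ q / q))
        ≤ c ^ (2+ε) * 2 ^ (2+ε) * (1 + β ^ (2+ε) * T ^ (2+ε)) * (t' - t) ^ q / q := by
      have h1 : t ^ q ≤ t' ^ q := Real.rpow_le_rpow ht0 htt' hq0.le
      have hpq : q + (2 + ε - q) = 2 + ε := by ring
      have hsplit : (t' - t) ^ (2+ε) = (t' - t) ^ q * (t' - t) ^ (2 + ε - q) := by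
        rw [← Real.rpow_add' hδ0 (by rw [hpq]; positivity), hpq]
      have hpq2 : (2 + ε - q) + q = 2 + ε := by ring
      have h4 : T ^ (2 + ε - q) * T ^ q = T ^ (2+ε) := by
        rw [← Real.rpow_add' hT.le (by rw [hpq2]; positivity), hpq2]
      have hmm : (t' - t) ^ (2 + ε - q) * t ^ q ≤ T ^ (2 + ε - q) * T ^ q :=
        mul_le_mul (Real.rpow_le_rpow hδ0 hδT (by linarith))
          (Real.rpow_le_rpow ht0 htT hq0.le) (Real.rpow_nonneg ht0 q)
          (Real.rpow_nonneg hT.le _)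
      have hkey : (t' - t) ^ (2+ε) * t ^ q ≤ T ^ (2+ε) * (t' - t) ^ q := by
        calc (t' - t) ^ (2+ε) * t ^ q
            = (t' - t) ^ q * ((t' - t) ^ (2 + ε - q) * t ^ q) := by rw [hsplit]; ring
          _ ≤ (t' - t) ^ q * (T ^ (2 + ε - q) * T ^ q) :=
              mul_le_mul_of_nonneg_left hmm (Real.rpow_nonneg hδ0 q)
          _ = T ^ (2+ε) * (t' - t) ^ q := by rw [h4]; ring
      have hnum : (t ^ q - (t' ^ q - (t' - t) ^ q)) + β ^ (2+ε) * ((t' - t) ^ (2+ε) * t ^ q)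
          ≤ (1 + β ^ (2+ε) * T ^ (2+ε)) * (t' - t) ^ q := by
        have hb2 : β ^ (2+ε) * ((t' - t) ^ (2+ε) * t ^ q)
            ≤ β ^ (2+ε) * (T ^ (2+ε) * (t' - t) ^ q) :=
          mul_le_mul_of_nonneg_left hkey (Real.rpow_nonneg hβ.le _)
        linarith [hb2, h1]
      have hcc : (0:ℝ) ≤ c ^ (2+ε) * 2 ^ (2+ε) := by positivity
      calc c ^ (2+ε) * 2 ^ (2+ε) *
            ((t ^ q / q - (t' ^ q - (t' - t) ^ q) / q) +
              β ^ (2+ε) * (t' - t) ^ (2+ε) * (t ^ q / q))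
          = (c ^ (2+ε) * 2 ^ (2+ε) *
              ((t ^ q - (t' ^ q - (t' - t) ^ q)) +
                β ^ (2+ε) * ((t' - t) ^ (2+ε) * t ^ q))) / q := by ring
        _ ≤ (c ^ (2+ε) * 2 ^ (2+ε) *
              ((1 + β ^ (2+ε) * T ^ (2+ε)) * (t' - t) ^ q)) / q :=
            (div_le_div_iff_of_pos_right hq0).mpr (mul_le_mul_of_nonneg_left hnum hcc)
        _ = c ^ (2+ε) * 2 ^ (2+ε) * (1 + β ^ (2+ε) * T ^ (2+ε)) * (t' - t) ^ q / q := by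
            ring
    have hae : (fun s => |c * Real.exp (-β * (t' - s)) * (t' - s) ^ (α - 1) -
          c * Real.exp (-β * (t - s)) * (t - s) ^ (α - 1)| ^ (2 + ε))
        ≤ᵐ[volume.restrict (Set.Icc (0:ℝ) t)]
        (fun s => c ^ (2+ε) * 2 ^ (2+ε) * (((t - s) ^ r - (t' - s) ^ r) +
          β ^ (2+ε) * (t' - t) ^ (2+ε) * (t - s) ^ r)) := by
      filter_upwards [ae_restrict_mem measurableSet_Icc,
        (measure_eq_zero_iff_ae_notMem.mp (Real.volume_singleton (a := t))).filter_mono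
          (ae_mono Measure.restrict_le_self)] with s hs hst
      have hst' : s ≠ t := by simpa using hst
      have hb : 0 < t - s := sub_pos.2 (lt_of_le_of_ne hs.2 hst')
      have ha : 0 < t' - s := lt_of_lt_of_le hb (by linarith)
      have hba : t - s ≤ t' - s := by linarith
      have ha'b' : (t' - s) ^ (α - 1) ≤ (t - s) ^ (α - 1) :=
        Real.rpow_le_rpow_of_nonpos hb hba (by linarith)
      have ha'0 : 0 ≤ (t' - s) ^ (α - 1) := Real.rpow_nonneg ha.le _
      have hb'0 : 0 ≤ (t - s) ^ (α - 1) := Real.rpow_nonneg hb.le _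
      have hea1 : Real.exp (-β * (t' - s)) ≤ 1 := Real.exp_le_one_iff.mpr (by nlinarith)
      have heb1 : Real.exp (-β * (t - s)) ≤ 1 := Real.exp_le_one_iff.mpr (by nlinarith)
      have heab : Real.exp (-β * (t' - s)) ≤ Real.exp (-β * (t - s)) :=
        Real.exp_le_exp.mpr (by nlinarith)
      have hE1 : Real.exp (-(β * (t' - t))) ≤ 1 :=
        Real.exp_le_one_iff.mpr (by nlinarith)
      have hlip : Real.exp (-β * (t - s)) - Real.exp (-β * (t' - s)) ≤ β * (t' - t) := by
        have hdecomp : Real.exp (-β * (t' - s))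
            = Real.exp (-β * (t - s)) * Real.exp (-(β * (t' - t))) := by
          rw [← Real.exp_add]; congr 1; ring
        have hexp : -(β * (t' - t)) + 1 ≤ Real.exp (-(β * (t' - t))) :=
          Real.add_one_le_exp _
        nlinarith [mul_nonneg (sub_nonneg.2 heb1) (sub_nonneg.2 hE1)]
      have hX0 : 0 ≤ (t - s) ^ (α - 1) - (t' - s) ^ (α - 1) := sub_nonneg.2 ha'b'
      have hY0 : 0 ≤ β * (t' - t) * (t - s) ^ (α - 1) :=
        mul_nonneg (mul_nonneg hβ.le hδ0) hb'0
      have htri : |Real.exp (-β * (t' - s)) * (t' - s) ^ (α - 1) -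
            Real.exp (-β * (t - s)) * (t - s) ^ (α - 1)|
          ≤ ((t - s) ^ (α - 1) - (t' - s) ^ (α - 1)) + β * (t' - t) * (t - s) ^ (α - 1) := by
        rw [abs_le]
        constructor
        · nlinarith [mul_nonneg (sub_nonneg.2 heb1) (sub_nonneg.2 ha'b'),
            mul_nonneg (sub_nonneg.2 hlip) ha'0,
            mul_nonneg (sub_nonneg.2 heab) (sub_nonneg.2 ha'b'),
            mul_nonneg (mul_nonneg hβ.le hδ0) (sub_nonneg.2 ha'b')]
        · nlinarith [mul_le_mul heab ha'b' ha'0 (Real.exp_pos (-β * (t - s))).le,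
            hX0, hY0]
      have hXp : ((t - s) ^ (α - 1) - (t' - s) ^ (α - 1)) ^ (2 + ε)
          ≤ (t - s) ^ r - (t' - s) ^ r := by
        have h := aux_sub_rpow_s3 ha'0 ha'b' hp1
        rwa [← Real.rpow_mul hb.le, ← Real.rpow_mul ha.le, ← hr_def] at h
      have hYp : (β * (t' - t) * (t - s) ^ (α - 1)) ^ (2 + ε)
          = β ^ (2+ε) * (t' - t) ^ (2+ε) * (t - s) ^ r := by
        rw [Real.mul_rpow (mul_nonneg hβ.le hδ0) hb'0, Real.mul_rpow hβ.le hδ0,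
          ← Real.rpow_mul hb.le, ← hr_def]
      calc |c * Real.exp (-β * (t' - s)) * (t' - s) ^ (α - 1) -
            c * Real.exp (-β * (t - s)) * (t - s) ^ (α - 1)| ^ (2 + ε)
          = (c * |Real.exp (-β * (t' - s)) * (t' - s) ^ (α - 1) -
              Real.exp (-β * (t - s)) * (t - s) ^ (α - 1)|) ^ (2 + ε) := by
            rw [show c * Real.exp (-β * (t' - s)) * (t' - s) ^ (α - 1) -
                c * Real.exp (-β * (t - s)) * (t - s) ^ (α - 1)
                = c * (Real.exp (-β * (t' - s)) * (t' - s) ^ (α - 1) -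
                  Real.exp (-β * (t - s)) * (t - s) ^ (α - 1)) from by ring,
              abs_mul, abs_of_pos hc]
        _ = c ^ (2+ε) * |Real.exp (-β * (t' - s)) * (t' - s) ^ (α - 1) -
              Real.exp (-β * (t - s)) * (t - s) ^ (α - 1)| ^ (2 + ε) :=
            Real.mul_rpow hc.le (abs_nonneg _)
        _ ≤ c ^ (2+ε) * (((t - s) ^ (α - 1) - (t' - s) ^ (α - 1)) +
              β * (t' - t) * (t - s) ^ (α - 1)) ^ (2 + ε) :=
            mul_le_mul_of_nonneg_left
              (Real.rpow_le_rpow (abs_nonneg _) htri (by linarith))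
              (Real.rpow_nonneg hc.le _)
        _ ≤ c ^ (2+ε) * (2 ^ (2+ε) *
              (((t - s) ^ (α - 1) - (t' - s) ^ (α - 1)) ^ (2 + ε) +
                (β * (t' - t) * (t - s) ^ (α - 1)) ^ (2 + ε))) :=
            mul_le_mul_of_nonneg_left (aux_two_rpow hX0 hY0 (by linarith))
              (Real.rpow_nonneg hc.le _)
        _ ≤ c ^ (2+ε) * (2 ^ (2+ε) *
              (((t - s) ^ r - (t' - s) ^ r) +
                β ^ (2+ε) * (t' - t) ^ (2+ε) * (t - s) ^ r)) := by
            have := add_le_add hXp (le_of_eq hYp)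
            exact mul_le_mul_of_nonneg_left
              (mul_le_mul_of_nonneg_left this (Real.rpow_nonneg (by norm_num) _))
              (Real.rpow_nonneg hc.le _)
        _ = c ^ (2+ε) * 2 ^ (2+ε) * (((t - s) ^ r - (t' - s) ^ r) +
              β ^ (2+ε) * (t' - t) ^ (2+ε) * (t - s) ^ r) := by ring
    by_cases hfi : IntervalIntegrable
        (fun s => |c * Real.exp (-β * (t' - s)) * (t' - s) ^ (α - 1) -
          c * Real.exp (-β * (t - s)) * (t - s) ^ (α - 1)| ^ (2 + ε)) volume 0 t
    · calc (∫ s in (0:ℝ)..t,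
            |c * Real.exp (-β * (t' - s)) * (t' - s) ^ (α - 1) -
              c * Real.exp (-β * (t - s)) * (t - s) ^ (α - 1)| ^ (2 + ε))
          ≤ ∫ s in (0:ℝ)..t, c ^ (2+ε) * 2 ^ (2+ε) *
              (((t - s) ^ r - (t' - s) ^ r) +
                β ^ (2+ε) * (t' - t) ^ (2+ε) * (t - s) ^ r) :=
            intervalIntegral.integral_mono_ae_restrict ht0 hfi hgi hae
        _ = _ := hgval
        _ ≤ _ := hbound
    · rw [intervalIntegral.integral_undef hfi]
      positivity
  have := add_le_add hI1 hI2
  calc _ ≤ c ^ (2+ε) * 2 ^ (2+ε) * (1 + β ^ (2+ε) * T ^ (2+ε)) * (t' - t) ^ q / q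
        + c ^ (2+ε) * (t' - t) ^ q / q := this
    _ = c ^ (2+ε) * (2 ^ (2+ε) * (1 + β ^ (2+ε) * T ^ (2+ε)) + 1) / q * (t' - t) ^ q := by
        ring
end
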